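/- For every real number x with 0 < x ≤ 1 and every integer n ≥ 2, e^x < (1 + x/n)^{n+1} < (1 + x/(n−1))^n. -/

import Mathlib

theorem stmt_18 (x : ℝ) (hx0 : 0 < x) (hx1 : x ≤ 1) (n : ℕ) (hn : 2 ≤ n) :
    Real.exp x < (1 + x / n) ^ (n + 1) ∧
    (1 + x / n) ^ (n + 1) < (1 + x / ((n : ℝ) - 1)) ^ n := by
  have hN : (2 : ℝ) ≤ (n : ℝ) := by exact_mod_cast hn
  set N : ℝ := (n : ℝ) with hNdef
  have hN0 : 0 < N := by linarith
  have hNx : 0 < N + x := by linarith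
  constructor
  · -- Part 1
    set t : ℝ := x / (N + x) with htdef
    have ht0 : 0 < t := div_pos hx0 hNx
    have h1 : Real.exp t < 1 + x / N := by
      have hne : -t ≠ 0 := neg_ne_zero.mpr ht0.ne'
      have := Real.add_one_lt_exp hne
      -- 1 - t < exp (-t)
      have h2 : 1 - t < Real.exp (-t) := by linarith
      have h3 : 1 - t = N / (N + x) := by
        field_simp [htdef]
        rw [htdef]; field_simp; ring
      have h4 : 0 < N / (N + x) := div_pos hN0 hNx
      have h5 : Real.exp t = (Real.exp (-t))⁻¹ := by
        rw [← Real.exp_neg]; ring_nf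
      rw [h5]
      have h6 : (Real.exp (-t))⁻¹ < (N / (N + x))⁻¹ := by
        apply inv_strictAnti₀ h4
        rw [h3] at h2; exact h2
      calc (Real.exp (-t))⁻¹ < (N / (N + x))⁻¹ := h6
        _ = 1 + x / N := by field_simp
    have hx_le : x ≤ ((n : ℝ) + 1) * t := by
      rw [htdef, ← mul_div_assoc, le_div_iff₀ hNx]
      nlinarith
    calc Real.exp x ≤ Real.exp (((n : ℝ) + 1) * t) := Real.exp_le_exp.2 hx_le
      _ = Real.exp t ^ (n + 1) := by
          rw [← Real.exp_nat_mul]; push_cast; ring_nf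
      _ < (1 + x / N) ^ (n + 1) :=
          pow_lt_pow_left₀ h1 (Real.exp_pos t).le (by omega)
  · -- Part 2
    have hN1 : 0 < N - 1 := by linarith
    set t : ℝ := x / ((N - 1) * (N + x)) with htdef
    have ht0 : 0 < t := div_pos hx0 (mul_pos hN1 hNx)
    have hfac : 1 + x / (N - 1) = (1 + x / N) * (1 + t) := by
      rw [htdef]; field_simp; ring
    have hbern : 1 + (n : ℝ) * t ≤ (1 + t) ^ n :=
      one_add_mul_le_pow (by linarith) n
    have hlt : 1 + x / N < 1 + (n : ℝ) * t := by
      have : x / N < (n : ℝ) * t := by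
        rw [htdef, ← mul_div_assoc, div_lt_div_iff₀ hN0 (mul_pos hN1 hNx)]
        rw [← hNdef]
        nlinarith [mul_nonneg (mul_nonneg (sub_nonneg.2 hx1) hN0.le) hx0.le, mul_pos hx0 hx0]
      linarith
    have hpos : 0 < (1 + x / N) ^ n := by positivity
    have hbase : 0 < 1 + x / N := by positivity
    calc (1 + x / N) ^ (n + 1) = (1 + x / N) ^ n * (1 + x / N) := pow_succ _ _
      _ < (1 + x / N) ^ n * (1 + t) ^ n := by
          apply mul_lt_mul_of_pos_left _ hpos
          linarith
      _ = ((1 + x / N) * (1 + t)) ^ n := (mul_pow _ _ _).symm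
      _ = (1 + x / (N - 1)) ^ n := by rw [← hfac]
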